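/- For every 2×2 complex unitary U and every θ ∈ ℝ: 1 − C_{l1}(U ψ_θ ψ_θ† U†) ≤ max( C_{l1}(U E₀₀ U†), C_{l1}(U E₁₁ U†) ). That is, for qubit unitary operations the l1 cohering power is always at least the l1 de-cohering power: C_{l1}(U) ≥ D_{l1}(U). Equivalently, writing U = [[a,b],[−conj(b),conj(a)]] with |a|²+|b|² = 1 (up to phase), 2|a||b| ≥ 1 − ||a|² − |b|²|. -/

import Mathlib

open Matrix BigOperators ComplexOrder

/-- The l1-coherence of a matrix: the sum of the absolute values of its
off-diagonal entries. -/
noncomputable def Cl1 {n : ℕ} (A : Matrix (Fin n) (Fin n) ℂ) : ℝ :=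
  ∑ i, ∑ j, if i ≠ j then ‖A i j‖ else 0

/-- A density matrix: positive semidefinite with trace 1. -/
def IsDensity {n : ℕ} (ρ : Matrix (Fin n) (Fin n) ℂ) : Prop :=
  ρ.PosSemidef ∧ ρ.trace = 1

/-- A quantum operation (CPTP map) given by a finite family of Kraus operators. -/
def IsQuantumOp {n : ℕ} (Φ : Matrix (Fin n) (Fin n) ℂ → Matrix (Fin n) (Fin n) ℂ) : Prop :=
  ∃ (m : ℕ) (K : Fin m → Matrix (Fin n) (Fin n) ℂ),
    (∑ i, (K i)ᴴ * K i) = 1 ∧ ∀ ρ, Φ ρ = ∑ i, K i * ρ * (K i)ᴴ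

/-- The dephasing map `Δ`, keeping only the diagonal part of a matrix. -/
def Deph {n : ℕ} (A : Matrix (Fin n) (Fin n) ℂ) : Matrix (Fin n) (Fin n) ℂ :=
  Matrix.of fun i j => if i = j then A i j else 0

/-- The maximally coherent qubit state vector `(1/√2)(1, e^{iθ})`. -/
noncomputable def psi (θ : ℝ) : Fin 2 → ℂ :=
  ![1 / (Real.sqrt 2 : ℂ), Complex.exp (θ * Complex.I) / (Real.sqrt 2 : ℂ)]

/-- The outer product `w w†` of a vector with itself. -/
def outer {n : ℕ} (w : Fin n → ℂ) : Matrix (Fin n) (Fin n) ℂ :=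
  Matrix.vecMulVec w (star w)

/-- The qubit unitary `[[a, b], [-conj b, conj a]]`. -/
def Uab (a b : ℂ) : Matrix (Fin 2) (Fin 2) ℂ :=
  !![a, b; -(starRingEnd ℂ) b, (starRingEnd ℂ) a]

/-- The binary entropy (base 2), with the convention `0 · log 0 = 0`. -/
noncomputable def H (x : ℝ) : ℝ :=
  -(x * Real.logb 2 x) - (1 - x) * Real.logb 2 (1 - x)


lemma key_ineq (x y m : ℝ) (hx : 0 ≤ x) (hy : 0 ≤ y) (h1 : x^2 + y^2 = 1)
    (h2 : |x^2 - y^2| ≤ m) : 1 - 2*(x*y) ≤ m := by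
  rcases le_total x y with h' | h'
  · rw [abs_sub_comm, abs_of_nonneg (by nlinarith)] at h2
    nlinarith
  · rw [abs_of_nonneg (by nlinarith)] at h2
    nlinarith

lemma normSq_of_conj_mul (z w : ℂ) (h : (starRingEnd ℂ) z * z + (starRingEnd ℂ) w * w = 1) :
    Complex.normSq z + Complex.normSq w = 1 := by
  have : ((Complex.normSq z + Complex.normSq w : ℝ) : ℂ) = 1 := by
    push_cast
    rw [Complex.normSq_eq_conj_mul_self, Complex.normSq_eq_conj_mul_self]
    exact h
  exact_mod_cast this

theorem cohering_power_ge_decohering_power_l1_qubit :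
    (∀ U : Matrix (Fin 2) (Fin 2) ℂ, Uᴴ * U = 1 → U * Uᴴ = 1 →
      ∀ θ : ℝ,
        1 - Cl1 (outer (U.mulVec (psi θ))) ≤
          max (Cl1 (U * Matrix.single (0 : Fin 2) 0 (1 : ℂ) * Uᴴ))
              (Cl1 (U * Matrix.single (1 : Fin 2) 1 (1 : ℂ) * Uᴴ))) ∧
    (∀ a b : ℂ, ‖a‖ ^ 2 + ‖b‖ ^ 2 = 1 →
      1 - |‖a‖ ^ 2 - ‖b‖ ^ 2| ≤
        2 * ‖a‖ * ‖b‖) := by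
  constructor
  · intro U hU1 hU2 θ
    have e00 : (Uᴴ * U) 0 0 = (1 : Matrix (Fin 2) (Fin 2) ℂ) 0 0 := by rw [hU1]
    have e01 : (Uᴴ * U) 0 1 = (1 : Matrix (Fin 2) (Fin 2) ℂ) 0 1 := by rw [hU1]
    have e11 : (Uᴴ * U) 1 1 = (1 : Matrix (Fin 2) (Fin 2) ℂ) 1 1 := by rw [hU1]
    have f00 : (U * Uᴴ) 0 0 = (1 : Matrix (Fin 2) (Fin 2) ℂ) 0 0 := by rw [hU2]
    have f11 : (U * Uᴴ) 1 1 = (1 : Matrix (Fin 2) (Fin 2) ℂ) 1 1 := by rw [hU2]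
    simp [Matrix.mul_apply, Fin.sum_univ_two, Matrix.one_apply] at e00 e01 e11 f00 f11
    set a := U 0 0 with ha
    set b := U 0 1 with hb
    set c := U 1 0 with hc
    set d := U 1 1 with hd
    have e01' : a * (starRingEnd ℂ) b + c * (starRingEnd ℂ) d = 0 := by
      have := congrArg (starRingEnd ℂ) e01
      simpa using this
    have hC1 : Cl1 (U * Matrix.single (0 : Fin 2) 0 (1 : ℂ) * Uᴴ)
        = 2 * (‖a‖ * ‖c‖) := by
      simp [Cl1, Fin.sum_univ_two, Matrix.mul_apply, Matrix.single, _root_.map_mul,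
        Complex.norm_conj, ← ha, ← hb, ← hc, ← hd]
      ring
    have hC2 : Cl1 (U * Matrix.single (1 : Fin 2) 1 (1 : ℂ) * Uᴴ)
        = 2 * (‖b‖ * ‖d‖) := by
      simp [Cl1, Fin.sum_univ_two, Matrix.mul_apply, Matrix.single, _root_.map_mul,
        Complex.norm_conj, ← ha, ← hb, ← hc, ← hd]
      ring
    set v0 := U.mulVec (psi θ) 0 with hv0
    set v1 := U.mulVec (psi θ) 1 with hv1
    have hCo : Cl1 (outer (U.mulVec (psi θ)))
        = 2 * (‖v0‖ * ‖v1‖) := by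
      simp [Cl1, Fin.sum_univ_two, outer, Matrix.vecMulVec_apply, _root_.map_mul,
        Complex.norm_conj, ← hv0, ← hv1]
      simp only [hv0, hv1, Matrix.mulVec, dotProduct, Fin.sum_univ_two]
      ring_nf
    set e := Complex.exp (θ * Complex.I) with he
    set s := ((Real.sqrt 2 : ℝ) : ℂ) with hs
    have hs2 : s * s = 2 := by
      rw [hs, ← Complex.ofReal_mul, Real.mul_self_sqrt (by norm_num)]
      norm_num
    have hee : e * (starRingEnd ℂ) e = 1 := by
      rw [Complex.mul_conj]
      norm_cast
      rw [← Complex.sq_norm, he, Complex.norm_exp_ofReal_mul_I]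
      norm_num
    have hv0e : v0 = (a + b * e) / s := by
      rw [hv0]
      simp [Matrix.mulVec, dotProduct, Fin.sum_univ_two, psi, ← ha, ← hb, ← he, ← hs]
      ring
    have hv1e : v1 = (c + d * e) / s := by
      rw [hv1]
      simp [Matrix.mulVec, dotProduct, Fin.sum_univ_two, psi, ← hc, ← hd, ← he, ← hs]
      ring
    have hcs : (starRingEnd ℂ) s = s := Complex.conj_ofReal _
    have hw : (a + b * e) * (starRingEnd ℂ) (a + b * e)
        + (c + d * e) * (starRingEnd ℂ) (c + d * e) = 2 := by
      simp only [map_add, _root_.map_mul]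
      linear_combination e00 + e11 + ((starRingEnd ℂ) b * b + (starRingEnd ℂ) d * d) * hee
        + (starRingEnd ℂ) e * e01' + e * e01
    have hwd : (a + b * e) * (starRingEnd ℂ) (a + b * e)
        - (c + d * e) * (starRingEnd ℂ) (c + d * e)
        = 2 * ((starRingEnd ℂ) a * b * e + (starRingEnd ℂ) ((starRingEnd ℂ) a * b * e)) := by
      simp only [map_add, _root_.map_mul, Complex.conj_conj]
      linear_combination 2*f00 - e00 - e11
        + ((starRingEnd ℂ) b * b - (starRingEnd ℂ) d * d) * hee - e * e01
        - (starRingEnd ℂ) e * e01'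
    have hvsum : v0 * (starRingEnd ℂ) v0 + v1 * (starRingEnd ℂ) v1 = 1 := by
      rw [hv0e, hv1e, map_div₀, map_div₀, hcs, div_mul_div_comm, div_mul_div_comm,
        ← add_div, hw, hs2]
      norm_num
    have hvd : v0 * (starRingEnd ℂ) v0 - v1 * (starRingEnd ℂ) v1
        = (starRingEnd ℂ) a * b * e + (starRingEnd ℂ) ((starRingEnd ℂ) a * b * e) := by
      rw [hv0e, hv1e, map_div₀, map_div₀, hcs, div_mul_div_comm, div_mul_div_comm,
        div_sub_div_same, hwd, hs2]
      ring
    have hsumR : ‖v0‖ ^ 2 + ‖v1‖ ^ 2 = 1 := by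
      rw [Complex.sq_norm, Complex.sq_norm]
      have : ((Complex.normSq v0 + Complex.normSq v1 : ℝ) : ℂ) = 1 := by
        push_cast
        rw [← Complex.mul_conj, ← Complex.mul_conj]
        exact hvsum
      exact_mod_cast this
    set z := (starRingEnd ℂ) a * b * e with hz
    have hdR : ‖v0‖ ^ 2 - ‖v1‖ ^ 2 = 2 * z.re := by
      rw [Complex.sq_norm, Complex.sq_norm]
      have : ((Complex.normSq v0 - Complex.normSq v1 : ℝ) : ℂ) = ((2 * z.re : ℝ) : ℂ) := by
        push_cast
        rw [← Complex.mul_conj, ← Complex.mul_conj, hvd, Complex.add_conj]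
        push_cast
        ring
      exact_mod_cast this
    have habsz : ‖z‖ = ‖a‖ * ‖b‖ := by
      rw [hz, norm_mul, norm_mul, Complex.norm_conj, he,
        Complex.norm_exp_ofReal_mul_I, mul_one]
    have hdiff : |‖v0‖ ^ 2 - ‖v1‖ ^ 2|
        ≤ 2 * (‖a‖ * ‖b‖) := by
      rw [hdR, abs_mul, abs_two]
      have := Complex.abs_re_le_norm z
      rw [habsz] at this
      nlinarith [abs_nonneg z.re]
    have g1 : Complex.normSq a + Complex.normSq c = 1 := normSq_of_conj_mul _ _ e00
    have g2 : Complex.normSq b + Complex.normSq d = 1 := normSq_of_conj_mul _ _ e11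
    have g3 : Complex.normSq a + Complex.normSq b = 1 := by
      apply normSq_of_conj_mul
      linear_combination f00
    have hcb : ‖c‖ = ‖b‖ := by
      rw [Complex.norm_def, Complex.norm_def]
      congr 1
      linarith
    have hda : ‖d‖ = ‖a‖ := by
      rw [Complex.norm_def, Complex.norm_def]
      congr 1
      linarith
    rw [hCo, hC1, hC2, hcb, hda]
    rw [mul_comm (‖b‖) (‖a‖), max_self]
    exact key_ineq _ _ _ (norm_nonneg _) (norm_nonneg _) hsumR hdiff
  · intro a b h
    have ha := norm_nonneg a
    have hb := norm_nonneg b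
    rcases le_total (‖a‖) (‖b‖) with h' | h'
    · rw [abs_sub_comm, abs_of_nonneg (by nlinarith)]
      nlinarith
    · rw [abs_of_nonneg (by nlinarith)]
      nlinarith
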